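/- Let k ≥ 4, let l be a divisor of k, and let T = S ∪ {1, 2, ..., l−1} ∪ {x : 3k+1 < x ≤ 4k+1 and x ≢ 1 (mod l)}, where S = ⟨2k+1, ..., 3k+1⟩. Then |λ(T)| = (3k²l − k² + 4kl³ + 3kl² + kl − 2l⁴ + 2l³)/(2l²). -/

import Mathlib

/-- The size of the partition associated to a numerical set `T`. -/
noncomputable def lamSize (T : Set ℕ) : ℕ :=
  {p : ℕ × ℕ | p.1 ∈ T ∧ p.2 ∉ T ∧ p.1 < p.2}.ncard

private lemma S_big_mem (k : ℕ) (hk : 1 ≤ k) :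
    ∀ n, 4 * k + 2 ≤ n → n ∈ AddSubmonoid.closure (Set.Icc (2 * k + 1) (3 * k + 1)) := by
  intro n
  induction n using Nat.strong_induction_on with
  | _ n ih =>
    intro hn
    have h1 : (2 * k + 1 : ℕ) ∈ Set.Icc (2 * k + 1) (3 * k + 1) := by
      simp [Set.mem_Icc]; omega
    by_cases h : n ≤ 6 * k + 2
    · rcases le_or_gt n (5 * k + 2) with h5 | h5
      · have hrw : n = (2 * k + 1) + (n - (2 * k + 1)) := by omega
        rw [hrw]
        exact add_mem (AddSubmonoid.subset_closure h1)
          (AddSubmonoid.subset_closure (by simp [Set.mem_Icc]; omega))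
      · have hrw : n = (3 * k + 1) + (n - (3 * k + 1)) := by omega
        rw [hrw]
        exact add_mem (AddSubmonoid.subset_closure (by simp [Set.mem_Icc]; omega))
          (AddSubmonoid.subset_closure (by simp [Set.mem_Icc]; omega))
    · have hrw : n = (2 * k + 1) + (n - (2 * k + 1)) := by omega
      rw [hrw]
      exact add_mem (AddSubmonoid.subset_closure h1) (ih _ (by omega) (by omega))

private lemma S_mem_iff (k : ℕ) (hk : 1 ≤ k) (n : ℕ) :
    n ∈ AddSubmonoid.closure (Set.Icc (2 * k + 1) (3 * k + 1)) ↔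
      n = 0 ∨ (2 * k + 1 ≤ n ∧ n ≤ 3 * k + 1) ∨ 4 * k + 2 ≤ n := by
  constructor
  · intro h
    induction h using AddSubmonoid.closure_induction with
    | mem x hx => simp [Set.mem_Icc] at hx; omega
    | zero => omega
    | add a b _ _ ha hb => omega
  · rintro (rfl | h | h)
    · exact zero_mem _
    · exact AddSubmonoid.subset_closure (by simp [Set.mem_Icc]; omega)
    · exact S_big_mem k hk n h

private lemma modfilter (k l q : ℕ) (hl : 1 ≤ l) (hk : k = l * q) (a : ℕ) :
    (Finset.Ioc (3 * k + 1) (3 * k + 1 + a)).filter (fun y => y % l = 1 % l)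
      = (Finset.Icc 1 (a / l)).image (fun m => 3 * k + 1 + m * l) := by
  ext y
  simp only [Finset.mem_filter, Finset.mem_Ioc, Finset.mem_image, Finset.mem_Icc]
  constructor
  · rintro ⟨⟨h1, h2⟩, h3⟩
    have hy : y = 3 * k + 1 + (y - (3 * k + 1)) := by omega
    set j := y - (3 * k + 1) with hjdef
    have hj1 : 1 ≤ j := by omega
    have hja : j ≤ a := by omega
    have hy2 : y = (1 + j) + 3 * q * l := by
      rw [hy, hk]; ring
    have hmod : (1 + j) % l = 1 % l := by
      rw [← Nat.add_mul_mod_self_right (1 + j) (3 * q) l]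
      rw [show (1+j) + 3 * q * l = y from hy2.symm]
      exact h3
    have hdvd : l ∣ j := by
      have h := (Nat.modEq_iff_dvd' (by omega : 1 ≤ 1 + j)).mp hmod.symm
      simpa using h
    obtain ⟨m, hm⟩ := hdvd
    refine ⟨m, ⟨?_, ?_⟩, ?_⟩
    · rcases Nat.eq_zero_or_pos m with rfl | h
      · simp at hm; omega
      · exact h
    · rw [Nat.le_div_iff_mul_le hl]
      calc m * l = j := by rw [hm, mul_comm]
        _ ≤ a := hja
    · rw [hy, hm]; ring
  · rintro ⟨m, ⟨hm1, hm2⟩, rfl⟩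
    have hml1 : 0 < m * l := Nat.mul_pos (by omega) hl
    have hmla : m * l ≤ a := by
      calc m * l ≤ (a / l) * l := Nat.mul_le_mul_right _ hm2
        _ ≤ a := Nat.div_mul_le_self a l
    refine ⟨⟨by omega, by omega⟩, ?_⟩
    have : 3 * k + 1 + m * l = 1 + (3 * q + m) * l := by rw [hk]; ring
    rw [this, Nat.add_mul_mod_self_right]

private lemma B_card_gen (k l : ℕ) (hl : 1 ≤ l) (hlk : l ≤ k) (T : Set ℕ)
    [DecidablePred (· ∈ T)]
    (hmemT : ∀ n, n ∈ T ↔ n < l ∨ (2*k+1 ≤ n ∧ n ≤ 3*k+1) ∨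
      (3*k+1 < n ∧ n ≤ 4*k+1 ∧ ¬(n % l = 1 % l)) ∨ 4*k+2 ≤ n)
    (q : ℕ) (hkq : k = l * q)
    (j : ℕ) (hj1 : 1 ≤ j) (hjk : j ≤ k) :
    ((Finset.range (3*k+1+j)).filter (fun u => u ∈ T)).card
      = l + (k+1) + ((j-1) - (j-1)/l) := by
  classical
  have hinj : Function.Injective (fun m : ℕ => 3*k+1+m*l) := by
    intro a b h
    simp only at h
    have h2 : a * l = b * l := Nat.add_left_cancel h
    exact Nat.eq_of_mul_eq_mul_right hl h2
  have hBeq : (Finset.range (3*k+1+j)).filter (fun u => u ∈ T)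
      = (Finset.range l ∪ Finset.Icc (2*k+1) (3*k+1)) ∪
        ((Finset.Ioc (3*k+1) (3*k+1+(j-1))).filter (fun y => ¬ (y % l = 1 % l))) := by
    ext y
    simp only [Finset.mem_filter, Finset.mem_range, Finset.mem_union, Finset.mem_Icc,
      Finset.mem_Ioc, hmemT y]
    by_cases hp : y % l = 1 % l <;> simp [hp] <;> omega
  rw [hBeq]
  have hd1 : Disjoint (Finset.range l) (Finset.Icc (2*k+1) (3*k+1)) := by
    simp only [Finset.disjoint_left, Finset.mem_range, Finset.mem_Icc]
    intro x hx; omega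
  have hd2 : Disjoint (Finset.range l ∪ Finset.Icc (2*k+1) (3*k+1))
      ((Finset.Ioc (3*k+1) (3*k+1+(j-1))).filter (fun y => ¬ (y % l = 1 % l))) := by
    simp only [Finset.disjoint_left, Finset.mem_union, Finset.mem_range, Finset.mem_Icc,
      Finset.mem_filter, Finset.mem_Ioc, not_and, not_not]
    intro x hx; rcases hx with hx | hx <;> intro h1 <;> omega
  rw [Finset.card_union_of_disjoint hd2, Finset.card_union_of_disjoint hd1]
  have hc3 : ((Finset.Ioc (3*k+1) (3*k+1+(j-1))).filter (fun y => ¬ (y % l = 1 % l))).card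
      = (j-1) - (j-1)/l := by
    have hpos : ((Finset.Ioc (3*k+1) (3*k+1+(j-1))).filter (fun y => y % l = 1 % l)).card
        = (j-1)/l := by
      rw [modfilter k l q hl hkq (j-1), Finset.card_image_of_injective _ hinj,
        Nat.card_Icc]
      simp
    have hIoc : (Finset.Ioc (3*k+1) (3*k+1+(j-1))).card = j - 1 := by
      rw [Nat.card_Ioc]; omega
    rw [Finset.filter_not, Finset.card_sdiff_of_subset (Finset.filter_subset _ _), hpos, hIoc]
  rw [hc3, Finset.card_range, Nat.card_Icc]
  omega

private lemma gaussZ (q : ℕ) : (∑ m ∈ Finset.Icc 1 q, (m:ℤ)) * 2 = (1 + q) * q := by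
  induction q with
  | zero => simp
  | succ n ih =>
    rw [Finset.sum_Icc_succ_top (by omega : 1 ≤ n + 1)]
    push_cast
    push_cast at ih
    linarith

theorem stmt_13 (k l : ℕ) (hk : 4 ≤ k) (hl : l ∣ k)
    (S T : Set ℕ)
    (hS : S = {n : ℕ | n ∈ AddSubmonoid.closure (Set.Icc (2 * k + 1) (3 * k + 1))})
    (hT : T = S ∪ Set.Icc 1 (l - 1) ∪
      {x : ℕ | 3 * k + 1 < x ∧ x ≤ 4 * k + 1 ∧ x % l ≠ 1 % l}) :
    (2 * (l : ℤ) ^ 2) * (lamSize T : ℤ) =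
      3 * (k : ℤ) ^ 2 * l - (k : ℤ) ^ 2 + 4 * k * (l : ℤ) ^ 3
        + 3 * k * (l : ℤ) ^ 2 + k * l - 2 * (l : ℤ) ^ 4 + 2 * (l : ℤ) ^ 3 := by
  classical
  have hl1 : 1 ≤ l := by
    rcases Nat.eq_zero_or_pos l with rfl | h
    · rw [zero_dvd_iff] at hl; omega
    · exact h
  have hlk : l ≤ k := Nat.le_of_dvd (by omega) hl
  obtain ⟨q, hkq⟩ : ∃ q, k = l * q := hl
  have hq1 : 1 ≤ q := by
    rcases Nat.eq_zero_or_pos q with h0 | h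
    · rw [h0, mul_zero] at hkq; omega
    · exact h
  have hql : k / l = q := by rw [hkq, Nat.mul_div_cancel_left q (by omega : 0 < l)]
  -- membership characterization of T
  have hmemT : ∀ n, n ∈ T ↔ n < l ∨ (2*k+1 ≤ n ∧ n ≤ 3*k+1) ∨
      (3*k+1 < n ∧ n ≤ 4*k+1 ∧ ¬(n % l = 1 % l)) ∨ 4*k+2 ≤ n := by
    intro n
    rw [hT, hS]
    simp only [Set.mem_union, Set.mem_setOf_eq, Set.mem_Icc,
      S_mem_iff k (by omega) n, ne_eq]
    by_cases hp : n % l = 1 % l <;> simp [hp] <;> omega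
  have hgap : ∀ n, n ∉ T ↔ (l ≤ n ∧ n ≤ 2*k) ∨
      (3*k+1 < n ∧ n ≤ 4*k+1 ∧ n % l = 1 % l) := by
    intro n
    rw [hmemT n]
    by_cases hp : n % l = 1 % l <;> simp [hp] <;> omega
  -- finset setup
  set B : ℕ → Finset ℕ := fun x => (Finset.range x).filter (fun u => u ∈ T) with hB
  set G2 : Finset ℕ := (Finset.Icc 1 q).image (fun m => 3*k+1+m*l) with hG2def
  set G : Finset ℕ := Finset.Icc l (2*k) ∪ G2 with hGdef
  set F : Finset (ℕ×ℕ) := G.biUnion (fun x => (B x).image (fun u => (u, x))) with hF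
  have hG2eq : G2 = (Finset.Ioc (3*k+1) (3*k+1+k)).filter (fun y => y % l = 1 % l) := by
    rw [modfilter k l q hl1 hkq k, hql]
  have hGmem : ∀ x, x ∈ G ↔ x ∉ T := by
    intro x
    rw [hgap x, hGdef, Finset.mem_union, hG2eq]
    simp only [Finset.mem_Icc, Finset.mem_filter, Finset.mem_Ioc]
    by_cases hp : x % l = 1 % l <;> simp [hp] <;> omega
  have hpinj : ∀ x : ℕ, Function.Injective fun u : ℕ => (u, x) := by
    intro x a b h
    exact congrArg Prod.fst h
  have hFset : {p : ℕ × ℕ | p.1 ∈ T ∧ p.2 ∉ T ∧ p.1 < p.2} = ↑F := by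
    ext ⟨u, x⟩
    simp only [Set.mem_setOf_eq, hF, Finset.coe_biUnion, Set.mem_iUnion,
      Finset.mem_coe, Finset.mem_image, hB, Finset.mem_filter, Finset.mem_range,
      Prod.mk.injEq]
    constructor
    · rintro ⟨hu, hx, hux⟩
      exact ⟨x, (hGmem x).mpr hx, u, ⟨hux, hu⟩, rfl, rfl⟩
    · rintro ⟨a, ha, b, ⟨hb1, hb2⟩, rfl, rfl⟩
      exact ⟨hb2, (hGmem a).mp ha, hb1⟩
  have hlam : lamSize T = F.card := by
    rw [lamSize, hFset, Set.ncard_coe_finset]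
  -- card of F as a sum
  have hcardF : F.card = ∑ x ∈ G, (B x).card := by
    rw [hF, Finset.card_biUnion]
    · exact Finset.sum_congr rfl fun x _ =>
        Finset.card_image_of_injective _ (hpinj x)
    · intro x _ y _ hxy
      simp only [Finset.disjoint_left, Finset.mem_image]
      rintro p ⟨a, _, rfl⟩ ⟨b, _, hb⟩
      have hyx : y = x := congrArg Prod.snd hb
      exact hxy hyx.symm
  have hdisjG : Disjoint (Finset.Icc l (2*k)) G2 := by
    rw [hG2eq]
    simp only [Finset.disjoint_left, Finset.mem_Icc, Finset.mem_filter, Finset.mem_Ioc]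
    intro x hx hx2; omega
  have hsumsplit : ∑ x ∈ G, (B x).card
      = ∑ x ∈ Finset.Icc l (2*k), (B x).card + ∑ x ∈ G2, (B x).card := by
    rw [hGdef, Finset.sum_union hdisjG]
  -- first sum
  have hB1 : ∀ x ∈ Finset.Icc l (2*k), (B x).card = l := by
    intro x hx
    simp only [Finset.mem_Icc] at hx
    have : B x = Finset.range l := by
      ext u
      simp only [hB, Finset.mem_filter, Finset.mem_range, hmemT u]
      by_cases hp : u % l = 1 % l <;> simp [hp] <;> omega
    rw [this, Finset.card_range]
  have hsum1 : ∑ x ∈ Finset.Icc l (2*k), (B x).card = (2*k+1-l) * l := by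
    rw [Finset.sum_congr rfl hB1, Finset.sum_const, Nat.card_Icc, smul_eq_mul]
  -- second sum
  have hinj2 : ∀ x ∈ Finset.Icc 1 q, ∀ y ∈ Finset.Icc 1 q,
      3*k+1+x*l = 3*k+1+y*l → x = y := by
    intro x _ y _ h
    have h2 : x * l = y * l := Nat.add_left_cancel h
    exact Nat.eq_of_mul_eq_mul_right hl1 h2
  have hdivml : ∀ m, 1 ≤ m → (m*l-1)/l = m - 1 := by
    intro m hm
    have hm' : m - 1 + 1 = m := by omega
    have h : m * l = (m-1)*l + l := by
      conv_lhs => rw [← hm']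
      ring
    have h2 : m * l - 1 = (l - 1) + (m - 1) * l := by
      generalize (m-1)*l = A at h ⊢
      omega
    rw [h2, Nat.add_mul_div_right _ _ (by omega : 0 < l), Nat.div_eq_of_lt (by omega)]
    omega
  have hsum2 : ∑ x ∈ G2, (B x).card
      = ∑ m ∈ Finset.Icc 1 q, (l + (k+1) + ((m*l-1) - (m-1))) := by
    rw [hG2def, Finset.sum_image hinj2]
    refine Finset.sum_congr rfl fun m hm => ?_
    simp only [Finset.mem_Icc] at hm
    have hml1 : 1 ≤ m * l := Nat.mul_pos (by omega) hl1
    have hmlk : m * l ≤ k := by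
      calc m * l ≤ q * l := Nat.mul_le_mul_right _ hm.2
        _ = k := by rw [hkq]; ring
    rw [hB]
    rw [B_card_gen k l hl1 hlk T hmemT q hkq (m*l) hml1 hmlk, hdivml m hm.1]
  -- assemble in ℕ
  have hlamN : lamSize T = (2*k+1-l) * l
      + ∑ m ∈ Finset.Icc 1 q, (l + (k+1) + ((m*l-1) - (m-1))) := by
    rw [hlam, hcardF, hsumsplit, hsum1, hsum2]
  -- move to ℤ
  have hterm : ∀ m ∈ Finset.Icc 1 q,
      ((l + (k+1) + ((m*l-1) - (m-1)) : ℕ) : ℤ) = ((l:ℤ)+k+1) + m*((l:ℤ)-1) := by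
    intro m hm
    simp only [Finset.mem_Icc] at hm
    have hml1 : 1 ≤ m * l := Nat.mul_pos (by omega) hl1
    have hmm : m ≤ m * l := by
      calc m = m * 1 := by ring
        _ ≤ m * l := Nat.mul_le_mul_left _ hl1
    have h1 : (m - 1 : ℕ) ≤ m*l - 1 := by omega
    push_cast [Nat.cast_sub h1, Nat.cast_sub hml1, Nat.cast_sub hm.1,
      Nat.cast_sub hl1]
    ring
  have hlamZ : (lamSize T : ℤ) = (2*(k:ℤ)+1-l) * l + q * ((l:ℤ)+k+1)
      + (∑ m ∈ Finset.Icc 1 q, (m:ℤ)) * ((l:ℤ)-1) := by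
    rw [hlamN, Nat.cast_add, Nat.cast_mul, Nat.cast_sub (by omega : l ≤ 2*k+1),
      Nat.cast_sum, Finset.sum_congr rfl hterm, Finset.sum_add_distrib,
      Finset.sum_const, Nat.card_Icc, ← Finset.sum_mul]
    push_cast
    ring
  have hkqZ : (k : ℤ) = l * q := by exact_mod_cast hkq
  rw [hkqZ] at hlamZ ⊢
  rw [hlamZ]
  linear_combination ((l:ℤ)^2 * ((l:ℤ)-1)) * gaussZ q
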